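/- Let H be a finite class of functions h : [n] → ℝ and let Z be a uniformly random subset of [n] of size u. Define the transductive complexity R⁺_u(H) = E[ sup_{h∈H} ( (1/u) ∑_{i∈Z} h(i) − (1/n) ∑_{i=1}^n h(i) ) ]. Let Y₁,...,Y_u be i.i.d. uniform on [n] and σ₁,...,σ_u i.i.d. Rademacher, and define the inductive Rademacher complexity R^{ind}_u(H) = E[ sup_{h∈H} (1/u) ∑_{i=1}^u σᵢ h(Yᵢ) ]. Then R⁺_u(H) ≤ 2 R^{ind}_u(H). -/

import Mathlib

open Finset


section helpers
variable {α : Type*} [Fintype α] [DecidableEq α]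

lemma sup'_wsum_le {β : Type*} (H : Finset β) (hH : H.Nonempty)
    {ι : Type*} (s : Finset ι) (w : ι → ℝ) (f : ι → β → ℝ)
    (hw : ∀ j ∈ s, 0 ≤ w j) :
    H.sup' hH (fun h => ∑ j ∈ s, w j * f j h) ≤ ∑ j ∈ s, w j * H.sup' hH (f j) := by
  apply Finset.sup'_le
  intro h hh
  apply Finset.sum_le_sum
  intro j hj
  exact mul_le_mul_of_nonneg_left (Finset.le_sup' (f j) hh) (hw j hj)

lemma sup'_add_le' {β : Type*} (H : Finset β) (hH : H.Nonempty) (f g : β → ℝ) :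
    H.sup' hH (fun h => f h + g h) ≤ H.sup' hH f + H.sup' hH g := by
  apply Finset.sup'_le
  intro h hh
  exact add_le_add (Finset.le_sup' f hh) (Finset.le_sup' g hh)

lemma exists_perm_mem_iff (Z Z' : Finset α) (hcard : Z.card = Z'.card) :
    ∃ π : Equiv.Perm α, ∀ a, π a ∈ Z' ↔ a ∈ Z := by
  have h1 : Fintype.card {x // x ∈ Z} = Fintype.card {x // x ∈ Z'} := by
    simpa [Fintype.card_coe] using hcard
  have h2 : Fintype.card {x // ¬ x ∈ Z} = Fintype.card {x // ¬ x ∈ Z'} := by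
    rw [Fintype.card_subtype_compl, Fintype.card_subtype_compl, h1]
  refine ⟨Equiv.subtypeCongr (Fintype.equivOfCardEq h1) (Fintype.equivOfCardEq h2), ?_⟩
  intro a
  by_cases ha : a ∈ Z
  · simp only [Equiv.subtypeCongr, Equiv.trans_apply, Equiv.sumCompl_symm_apply_of_pos ha,
      Equiv.sumCongr_apply, Sum.map_inl, Equiv.sumCompl_apply_inl]
    exact iff_of_true (Fintype.equivOfCardEq h1 ⟨a, ha⟩).2 ha
  · simp only [Equiv.subtypeCongr, Equiv.trans_apply, Equiv.sumCompl_symm_apply_of_neg ha,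
      Equiv.sumCongr_apply, Sum.map_inr, Equiv.sumCompl_apply_inr]
    exact iff_of_false (Fintype.equivOfCardEq h2 ⟨a, ha⟩).2 ha

lemma N_image (π : Equiv.Perm α) (S : Finset α) (u : ℕ) :
    (((univ : Finset α).powersetCard u).filter (fun Z => S.image π ⊆ Z)).card
      = (((univ : Finset α).powersetCard u).filter (fun Z => S ⊆ Z)).card := by
  apply Finset.card_nbij' (fun Z => Z.image π.symm) (fun Z => Z.image π)
  · intro Z hZ
    simp only [Finset.mem_coe, mem_filter, mem_powersetCard_univ] at hZ ⊢
    refine ⟨by rw [Finset.card_image_of_injective _ π.symm.injective]; exact hZ.1, ?_⟩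
    intro a ha
    have := hZ.2 (Finset.mem_image_of_mem π ha)
    simpa using Finset.mem_image_of_mem π.symm this
  · intro Z hZ
    simp only [Finset.mem_coe, mem_filter, mem_powersetCard_univ] at hZ ⊢
    refine ⟨by rw [Finset.card_image_of_injective _ π.injective]; exact hZ.1, ?_⟩
    intro a ha
    obtain ⟨b, hb, rfl⟩ := Finset.mem_image.1 ha
    exact Finset.mem_image_of_mem π (hZ.2 hb)
  · intro Z hZ
    simp [Finset.image_image, Function.comp_def]
  · intro Z hZ
    simp [Finset.image_image, Function.comp_def]
end helpers

section nu
variable (n u : ℕ)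

/-- number of u-subsets containing S -/
def NN (S : Finset (Fin n)) : ℕ :=
  (((univ : Finset (Fin n)).powersetCard u).filter (fun Z => S ⊆ Z)).card

/-- conditional weight of Z given Y -/
noncomputable def nuW (Y : Fin u → Fin n) (Z : Finset (Fin n)) : ℝ :=
  if Finset.image Y univ ⊆ Z then ((NN n u (Finset.image Y univ) : ℝ))⁻¹ else 0

variable {n u}

lemma nuW_nonneg (Y : Fin u → Fin n) (Z : Finset (Fin n)) : 0 ≤ nuW n u Y Z := by
  unfold nuW; split <;> positivity

lemma NN_pos (hun : u ≤ n) {S : Finset (Fin n)} (hS : S.card ≤ u) : 0 < NN n u S := by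
  obtain ⟨T, hST, -, hT⟩ := Finset.exists_subsuperset_card_eq S.subset_univ hS
    (by simpa using hun)
  refine Finset.card_pos.2 ⟨T, ?_⟩
  simp [Finset.mem_filter, Finset.mem_powersetCard_univ, hT, hST]

lemma card_image_le_u (Y : Fin u → Fin n) : (Finset.image Y univ).card ≤ u := by
  simpa using Finset.card_image_le (s := (univ : Finset (Fin u))) (f := Y)

lemma sum_nuW_row (hun : u ≤ n) (Y : Fin u → Fin n) :
    ∑ Z ∈ (univ : Finset (Fin n)).powersetCard u, nuW n u Y Z = 1 := by
  rw [show (∑ Z ∈ (univ : Finset (Fin n)).powersetCard u, nuW n u Y Z)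
      = ∑ Z ∈ ((univ : Finset (Fin n)).powersetCard u).filter
          (fun Z => Finset.image Y univ ⊆ Z), ((NN n u (Finset.image Y univ) : ℝ))⁻¹ from ?_]
  · rw [Finset.sum_const, NN]
    have h := NN_pos hun (card_image_le_u Y)
    rw [NN] at h
    field_simp
    rw [nsmul_eq_mul, mul_one_div, div_self (Nat.cast_ne_zero.2 h.ne')]
  · rw [Finset.sum_filter]
    apply Finset.sum_congr rfl
    intro Z _
    simp [nuW]

lemma nuW_comp_perm (π : Equiv.Perm (Fin n)) (Y : Fin u → Fin n) {Z Z' : Finset (Fin n)}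
    (hmem : ∀ a, π a ∈ Z' ↔ a ∈ Z) : nuW n u (π ∘ Y) Z' = nuW n u Y Z := by
  have himg : Finset.image (π ∘ Y) univ = Finset.image π (Finset.image Y univ) := by
    rw [Finset.image_image]
  have hsub : Finset.image (π ∘ Y) univ ⊆ Z' ↔ Finset.image Y univ ⊆ Z := by
    rw [himg]
    constructor
    · intro h a ha
      exact (hmem a).1 (h (Finset.mem_image_of_mem π ha))
    · intro h a ha
      obtain ⟨b, hb, rfl⟩ := Finset.mem_image.1 ha
      exact (hmem b).2 (h hb)
  have hN : NN n u (Finset.image (π ∘ Y) univ) = NN n u (Finset.image Y univ) := by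
    rw [himg, NN, NN, N_image]
  unfold nuW
  rw [hN]
  by_cases h : Finset.image Y univ ⊆ Z
  · rw [if_pos (hsub.2 h), if_pos h]
  · rw [if_neg (fun hc => h (hsub.1 hc)), if_neg h]

lemma sum_comp_perm (π : Equiv.Perm (Fin n)) (F : (Fin u → Fin n) → ℝ) :
    ∑ Y : Fin u → Fin n, F (π ∘ Y) = ∑ Y : Fin u → Fin n, F Y := by
  apply Fintype.sum_equiv (Equiv.arrowCongr (Equiv.refl (Fin u)) π)
  intro Y
  rfl

end nu
section W
variable {n u : ℕ}

noncomputable def WW (n u : ℕ) (Z : Finset (Fin n)) : ℝ := ∑ Y : Fin u → Fin n, nuW n u Y Z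

lemma WW_const {Z Z' : Finset (Fin n)} (hZ : Z ∈ (univ : Finset (Fin n)).powersetCard u)
    (hZ' : Z' ∈ (univ : Finset (Fin n)).powersetCard u) : WW n u Z = WW n u Z' := by
  rw [Finset.mem_powersetCard_univ] at hZ hZ'
  obtain ⟨π, hπ⟩ := exists_perm_mem_iff Z' Z (hZ'.trans hZ.symm)
  calc WW n u Z = ∑ Y : Fin u → Fin n, nuW n u (π ∘ Y) Z := (sum_comp_perm π _).symm
    _ = ∑ Y : Fin u → Fin n, nuW n u Y Z' := by
        apply Finset.sum_congr rfl
        intro Y _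
        exact nuW_comp_perm π Y hπ
    _ = WW n u Z' := rfl

lemma sum_WW (hun : u ≤ n) :
    ∑ Z ∈ (univ : Finset (Fin n)).powersetCard u, WW n u Z = (n : ℝ) ^ u := by
  unfold WW
  rw [Finset.sum_comm]
  have : ∀ Y : Fin u → Fin n, ∑ Z ∈ (univ : Finset (Fin n)).powersetCard u, nuW n u Y Z = 1 :=
    sum_nuW_row hun
  rw [Finset.sum_congr rfl (fun Y _ => this Y)]
  simp [Fintype.card_fun]

lemma nuW_eq_zero_of_not_mem {Y : Fin u → Fin n} {Z : Finset (Fin n)} (i : Fin u)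
    (h : Y i ∉ Z) : nuW n u Y Z = 0 := by
  unfold nuW
  rw [if_neg]
  intro hc
  exact h (hc (Finset.mem_image_of_mem Y (Finset.mem_univ i)))

lemma WW_pos (hu : 0 < u) (hun : u ≤ n) {Z : Finset (Fin n)}
    (hZ : Z ∈ (univ : Finset (Fin n)).powersetCard u) : 0 < WW n u Z := by
  rw [Finset.mem_powersetCard_univ] at hZ
  obtain ⟨z₀, hz₀⟩ := Finset.card_pos.1 (hZ ▸ hu)
  have hne : (univ : Finset (Fin u)).Nonempty := by
    simpa [Finset.univ_nonempty_iff] using Fin.pos_iff_nonempty.1 hu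
  apply Finset.sum_pos' (fun Y _ => nuW_nonneg Y Z)
  refine ⟨fun _ => z₀, Finset.mem_univ _, ?_⟩
  have himg : Finset.image (fun _ : Fin u => z₀) univ = {z₀} := Finset.image_const hne z₀
  unfold nuW
  rw [himg, if_pos (Finset.singleton_subset_iff.2 hz₀)]
  have := NN_pos (n := n) hun (S := {z₀}) (by simp; omega)
  positivity

lemma fiber_eq (hu : 0 < u) (hun : u ≤ n) {Z : Finset (Fin n)}
    (hZ : Z ∈ (univ : Finset (Fin n)).powersetCard u) (i : Fin u) {z : Fin n} (hz : z ∈ Z) :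
    ∑ Y : Fin u → Fin n, (if Y i = z then nuW n u Y Z else 0) = WW n u Z / u := by
  have hcard : Z.card = u := (Finset.mem_powersetCard_univ.1 hZ)
  have swap_eq : ∀ z' ∈ Z, (∑ Y : Fin u → Fin n, if Y i = z' then nuW n u Y Z else 0)
      = ∑ Y : Fin u → Fin n, if Y i = z then nuW n u Y Z else 0 := by
    intro z' hz'
    set π := Equiv.swap z z' with hπdef
    have hmem : ∀ a, π a ∈ Z ↔ a ∈ Z := by
      intro a
      rcases eq_or_ne a z with rfl | h1
      · simp [π, Equiv.swap_apply_left, hz, hz']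
      rcases eq_or_ne a z' with rfl | h2
      · simp [π, Equiv.swap_apply_right, hz, hz']
      · simp [π, Equiv.swap_apply_of_ne_of_ne h1 h2]
    calc (∑ Y : Fin u → Fin n, if Y i = z' then nuW n u Y Z else 0)
        = ∑ Y : Fin u → Fin n, if (π ∘ Y) i = z' then nuW n u (π ∘ Y) Z else 0 :=
          (sum_comp_perm π _).symm
      _ = ∑ Y : Fin u → Fin n, if Y i = z then nuW n u Y Z else 0 := by
          apply Finset.sum_congr rfl
          intro Y _
          rw [nuW_comp_perm π Y hmem]
          have hcond : ((π ∘ Y) i = z') = (Y i = z) := by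
            simp only [Function.comp_apply]
            apply propext
            constructor
            · intro h
              apply π.injective
              rw [h, hπdef, Equiv.swap_apply_left]
            · intro h
              rw [h, hπdef, Equiv.swap_apply_left]
          exact if_congr (Iff.of_eq hcond) rfl rfl
  have hsum : ∑ z' ∈ Z, (∑ Y : Fin u → Fin n, if Y i = z' then nuW n u Y Z else 0)
      = WW n u Z := by
    rw [Finset.sum_comm]
    unfold WW
    apply Finset.sum_congr rfl
    intro Y _
    rw [Finset.sum_ite_eq Z (Y i) (fun _ => nuW n u Y Z)]
    by_cases h : Y i ∈ Z
    · rw [if_pos h]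
    · rw [if_neg h, nuW_eq_zero_of_not_mem i h]
  rw [Finset.sum_congr rfl swap_eq] at hsum
  rw [Finset.sum_const, hcard] at hsum
  have hune : (u : ℝ) ≠ 0 := Nat.cast_ne_zero.2 hu.ne'
  rw [← hsum, nsmul_eq_mul, mul_div_cancel_left₀ _ hune]

lemma sum_nuW_mul (hu : 0 < u) (hun : u ≤ n) {Z : Finset (Fin n)}
    (hZ : Z ∈ (univ : Finset (Fin n)).powersetCard u) (h : Fin n → ℝ) :
    ∑ Y : Fin u → Fin n, nuW n u Y Z * ((∑ i, h (Y i)) / u)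
      = WW n u Z * ((∑ z ∈ Z, h z) / u) := by
  have key : ∀ i : Fin u, ∑ Y : Fin u → Fin n, nuW n u Y Z * h (Y i)
      = (WW n u Z / u) * ∑ z ∈ Z, h z := by
    intro i
    have step : ∀ Y : Fin u → Fin n, nuW n u Y Z * h (Y i)
        = ∑ z ∈ Z, (if Y i = z then nuW n u Y Z else 0) * h z := by
      intro Y
      rw [Finset.sum_congr rfl (fun z _ => by rw [ite_mul, zero_mul])]
      rw [Finset.sum_ite_eq Z (Y i) (fun z => nuW n u Y Z * h z)]
      by_cases hmem : Y i ∈ Z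
      · rw [if_pos hmem]
      · rw [if_neg hmem, nuW_eq_zero_of_not_mem i hmem, zero_mul]
    rw [Finset.sum_congr rfl (fun Y _ => step Y), Finset.sum_comm]
    rw [Finset.mul_sum]
    apply Finset.sum_congr rfl
    intro z hzmem
    rw [← Finset.sum_mul, fiber_eq hu hun hZ i hzmem]
  calc ∑ Y : Fin u → Fin n, nuW n u Y Z * ((∑ i, h (Y i)) / u)
      = (∑ i : Fin u, ∑ Y : Fin u → Fin n, nuW n u Y Z * h (Y i)) / u := by
        rw [Finset.sum_comm]
        rw [Finset.sum_div]
        apply Finset.sum_congr rfl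
        intro Y _
        rw [← Finset.mul_sum]
        exact (mul_div_assoc _ _ _).symm
    _ = WW n u Z * ((∑ z ∈ Z, h z) / u) := by
        rw [Finset.sum_congr rfl (fun i _ => key i), Finset.sum_const]
        simp only [Finset.card_univ, Fintype.card_fin, nsmul_eq_mul]
        have : (u : ℝ) ≠ 0 := Nat.cast_ne_zero.2 hu.ne'
        field_simp

end W
section steps
variable {n u : ℕ}

lemma step1 (hn : 0 < n) (hu : 0 < u) (hun : u ≤ n)
    (H : Finset (Fin n → ℝ)) (hH : H.Nonempty) :
    (∑ Z ∈ (Finset.univ : Finset (Fin n)).powersetCard u,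
        H.sup' hH (fun h => (∑ i ∈ Z, h i) / (u : ℝ) - (∑ i, h i) / (n : ℝ)))
      / (((Finset.univ : Finset (Fin n)).powersetCard u).card : ℝ)
    ≤ (∑ Y : Fin u → Fin n,
        H.sup' hH (fun h => (∑ i, h (Y i)) / (u : ℝ) - (∑ i, h i) / (n : ℝ)))
      / (n : ℝ) ^ u := by
  set P := (Finset.univ : Finset (Fin n)).powersetCard u with hP
  obtain ⟨Z₀, hZ₀sub, hZ₀card⟩ := Finset.exists_subset_card_eq (s := (univ : Finset (Fin n))) (n := u)
    (by simpa using hun)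
  have hZ₀ : Z₀ ∈ P := Finset.mem_powersetCard_univ.2 hZ₀card
  have hPne : P.Nonempty := ⟨Z₀, hZ₀⟩
  have hCpos : (0 : ℝ) < (P.card : ℝ) := by
    exact_mod_cast Finset.card_pos.2 hPne
  set W₀ := WW n u Z₀ with hW₀
  have hW₀pos : 0 < W₀ := WW_pos hu hun hZ₀
  set S : (Fin u → Fin n) → ℝ :=
    fun Y => H.sup' hH (fun h => (∑ i, h (Y i)) / (u : ℝ) - (∑ i, h i) / (n : ℝ)) with hS
  -- per Z bound
  have key : ∀ Z ∈ P, H.sup' hH (fun h => (∑ i ∈ Z, h i) / (u : ℝ) - (∑ i, h i) / (n : ℝ))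
      ≤ ∑ Y : Fin u → Fin n, (nuW n u Y Z / W₀) * S Y := by
    intro Z hZ
    have hWZ : WW n u Z = W₀ := WW_const hZ hZ₀
    have hident : ∀ h : Fin n → ℝ,
        (∑ i ∈ Z, h i) / (u : ℝ) - (∑ i, h i) / (n : ℝ)
        = ∑ Y : Fin u → Fin n, (nuW n u Y Z / W₀) *
            ((∑ i, h (Y i)) / (u : ℝ) - (∑ i, h i) / (n : ℝ)) := by
      intro h
      have hW₀ne : W₀ ≠ 0 := hW₀pos.ne'
      have hA : ∑ Y : Fin u → Fin n, nuW n u Y Z * ((∑ i, h (Y i)) / (u : ℝ))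
          = W₀ * ((∑ z ∈ Z, h z) / (u : ℝ)) := by
        rw [sum_nuW_mul hu hun hZ h, hWZ]
      have hB : ∑ Y : Fin u → Fin n, nuW n u Y Z = W₀ := by
        rw [← hWZ]; rfl
      have hrw : ∀ Y : Fin u → Fin n, (nuW n u Y Z / W₀) *
            ((∑ i, h (Y i)) / (u : ℝ) - (∑ i, h i) / (n : ℝ))
          = (nuW n u Y Z * ((∑ i, h (Y i)) / (u : ℝ))) / W₀
            - (nuW n u Y Z * ((∑ i, h i) / (n : ℝ))) / W₀ := by
        intro Y; ring
      rw [Finset.sum_congr rfl (fun Y _ => hrw Y), Finset.sum_sub_distrib,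
        ← Finset.sum_div, ← Finset.sum_div, hA, ← Finset.sum_mul, hB,
        mul_div_cancel_left₀ _ hW₀ne, mul_div_cancel_left₀ _ hW₀ne]
    calc H.sup' hH (fun h => (∑ i ∈ Z, h i) / (u : ℝ) - (∑ i, h i) / (n : ℝ))
        = H.sup' hH (fun h => ∑ Y : Fin u → Fin n, (nuW n u Y Z / W₀) *
            ((∑ i, h (Y i)) / (u : ℝ) - (∑ i, h i) / (n : ℝ))) := by
          apply Finset.sup'_congr hH rfl
          intro h _
          exact hident h
      _ ≤ ∑ Y : Fin u → Fin n, (nuW n u Y Z / W₀) * S Y := by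
          apply sup'_wsum_le
          intro Y _
          exact div_nonneg (nuW_nonneg Y Z) hW₀pos.le
  -- sum over Z
  have hsumZ : ∑ Z ∈ P, H.sup' hH (fun h => (∑ i ∈ Z, h i) / (u : ℝ) - (∑ i, h i) / (n : ℝ))
      ≤ (∑ Y : Fin u → Fin n, S Y) / W₀ := by
    calc ∑ Z ∈ P, H.sup' hH (fun h => (∑ i ∈ Z, h i) / (u : ℝ) - (∑ i, h i) / (n : ℝ))
        ≤ ∑ Z ∈ P, ∑ Y : Fin u → Fin n, (nuW n u Y Z / W₀) * S Y := Finset.sum_le_sum key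
      _ = ∑ Y : Fin u → Fin n, (∑ Z ∈ P, nuW n u Y Z) * S Y / W₀ := by
          rw [Finset.sum_comm]
          apply Finset.sum_congr rfl
          intro Y _
          rw [Finset.sum_mul, Finset.sum_div]
          apply Finset.sum_congr rfl
          intro Z _
          ring
      _ = (∑ Y : Fin u → Fin n, S Y) / W₀ := by
          rw [Finset.sum_div]
          apply Finset.sum_congr rfl
          intro Y _
          rw [sum_nuW_row hun Y, one_mul]
  -- W₀ * card = n ^ u
  have hWC : W₀ * (P.card : ℝ) = (n : ℝ) ^ u := by
    have h1 : ∑ Z ∈ P, WW n u Z = (n : ℝ) ^ u := sum_WW hun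
    have h2 : ∑ Z ∈ P, WW n u Z = (P.card : ℝ) * W₀ := by
      rw [Finset.sum_congr rfl (fun Z hZ => WW_const hZ hZ₀), Finset.sum_const,
        nsmul_eq_mul]
    rw [h2] at h1
    linarith [h1]
  rw [div_le_div_iff₀ hCpos (by positivity : (0:ℝ) < (n:ℝ)^u)]
  calc (∑ Z ∈ P, H.sup' hH fun h => (∑ i ∈ Z, h i) / (u:ℝ) - (∑ i, h i) / (n:ℝ)) * (n:ℝ)^u
      ≤ ((∑ Y : Fin u → Fin n, S Y) / W₀) * (n:ℝ)^u := by
        apply mul_le_mul_of_nonneg_right hsumZ (by positivity)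
    _ = (∑ Y : Fin u → Fin n, S Y) * (P.card : ℝ) := by
        rw [← hWC]
        field_simp
end steps
section two
variable {n u : ℕ}

lemma sum_eval (g : Fin n → ℝ) (i : Fin u) :
    ∑ Y : Fin u → Fin n, g (Y i) = (n : ℝ) ^ (u - 1) * ∑ z : Fin n, g z := by
  have h1 : ∑ Y : Fin u → Fin n, g (Y i)
      = ∑ p : Fin n × ({ j : Fin u // j ≠ i } → Fin n), g p.1 :=
    Fintype.sum_equiv (Equiv.funSplitAt i (Fin n)) _ _ (fun Y => rfl)
  have hcard : Fintype.card ({ j : Fin u // j ≠ i } → Fin n) = n ^ (u - 1) := by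
    have h2 := Fintype.card_subtype_compl (fun j : Fin u => j = i)
    rw [Fintype.card_subtype_eq, Fintype.card_fin] at h2
    rw [Fintype.card_fun, Fintype.card_fin]
    exact congrArg (fun k => n ^ k) h2
  rw [h1, Fintype.sum_prod_type, Finset.mul_sum]
  apply Finset.sum_congr rfl
  intro a _
  have hconst : ∀ y : { j : Fin u // j ≠ i } → Fin n, g (a, y).1 = g a := fun y => rfl
  rw [Finset.sum_congr rfl (fun y _ => hconst y), Finset.sum_const, Finset.card_univ,
    hcard, nsmul_eq_mul]
  push_cast
  ring

lemma step2 (hn : 0 < n) (hu : 0 < u)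
    (H : Finset (Fin n → ℝ)) (hH : H.Nonempty) :
    (∑ Y : Fin u → Fin n,
        H.sup' hH (fun h => (∑ i, h (Y i)) / (u : ℝ) - (∑ i, h i) / (n : ℝ)))
      / (n : ℝ) ^ u
    ≤ 2 * ((∑ Y : Fin u → Fin n, ∑ σ : Fin u → Bool,
          H.sup' hH (fun h => (∑ i, (if σ i then (1 : ℝ) else -1) * h (Y i)) / (u : ℝ)))
        / ((n : ℝ) ^ u * 2 ^ u)) := by
  have hnpow : (0:ℝ) < (n:ℝ) ^ u := by positivity
  have hnne : ((n:ℝ)^u) ≠ 0 := hnpow.ne'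
  have hpow1 : (n:ℝ) ^ u = (n:ℝ) ^ (u - 1) * n := by
    rw [← pow_succ]
    congr 1
    omega
  set T : (Fin u → Fin n) → (Fin u → Bool) → ℝ := fun Y σ =>
    H.sup' hH (fun h => (∑ i, (if σ i then (1 : ℝ) else -1) * h (Y i)) / (u : ℝ)) with hT
  set Dp : (Fin u → Fin n) → (Fin u → Fin n) → ℝ := fun Y Y' =>
    H.sup' hH (fun h => (∑ i, (h (Y i) - h (Y' i))) / (u : ℝ)) with hDp
  set Ds : (Fin u → Bool) → (Fin u → Fin n) → (Fin u → Fin n) → ℝ := fun σ Y Y' =>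
    H.sup' hH (fun h =>
      (∑ i, (if σ i then (1 : ℝ) else -1) * (h (Y i) - h (Y' i))) / (u : ℝ)) with hDs
  -- (1) ghost sample
  have hS_le : ∀ Y : Fin u → Fin n,
      H.sup' hH (fun h => (∑ i, h (Y i)) / (u : ℝ) - (∑ i, h i) / (n : ℝ))
      ≤ ∑ Y' : Fin u → Fin n, ((n:ℝ)^u)⁻¹ * Dp Y Y' := by
    intro Y
    have hident : ∀ h : Fin n → ℝ, (∑ i, h (Y i)) / (u : ℝ) - (∑ i, h i) / (n : ℝ)
        = ∑ Y' : Fin u → Fin n, ((n:ℝ)^u)⁻¹ * ((∑ i, (h (Y i) - h (Y' i))) / (u : ℝ)) := by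
      intro h
      have hsplit : ∀ Y' : Fin u → Fin n,
          ((n:ℝ)^u)⁻¹ * ((∑ i, (h (Y i) - h (Y' i))) / (u : ℝ))
          = ((n:ℝ)^u)⁻¹ * ((∑ i, h (Y i)) / (u : ℝ))
            - ((n:ℝ)^u)⁻¹ * ((∑ i, h (Y' i)) / (u : ℝ)) := by
        intro Y'
        rw [Finset.sum_sub_distrib]
        ring
      rw [Finset.sum_congr rfl (fun Y' _ => hsplit Y'), Finset.sum_sub_distrib,
        Finset.sum_const, Finset.card_univ, Fintype.card_fun, Fintype.card_fin,
        Fintype.card_fin, nsmul_eq_mul]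
      have h2 : ∑ Y' : Fin u → Fin n, ((n:ℝ)^u)⁻¹ * ((∑ i, h (Y' i)) / (u : ℝ))
          = (∑ i, h i) / (n : ℝ) := by
        have h3 : ∑ Y' : Fin u → Fin n, (∑ i, h (Y' i)) = (u : ℝ) * ((n:ℝ)^(u-1) * ∑ z, h z) := by
          rw [Finset.sum_comm]
          rw [Finset.sum_congr rfl (fun i _ => sum_eval h i), Finset.sum_const,
            Finset.card_univ, Fintype.card_fin, nsmul_eq_mul]
        have hune : (u:ℝ) ≠ 0 := Nat.cast_ne_zero.2 hu.ne'
        have hnne' : (n:ℝ) ≠ 0 := Nat.cast_ne_zero.2 hn.ne'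
        rw [← Finset.mul_sum, ← Finset.sum_div, h3, hpow1]
        field_simp
      rw [h2]
      push_cast
      field_simp
    calc H.sup' hH (fun h => (∑ i, h (Y i)) / (u : ℝ) - (∑ i, h i) / (n : ℝ))
        = H.sup' hH (fun h => ∑ Y' : Fin u → Fin n,
            ((n:ℝ)^u)⁻¹ * ((∑ i, (h (Y i) - h (Y' i))) / (u : ℝ))) := by
          apply Finset.sup'_congr hH rfl
          intro h _
          exact hident h
      _ ≤ ∑ Y' : Fin u → Fin n, ((n:ℝ)^u)⁻¹ * Dp Y Y' := by
          apply sup'_wsum_le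
          intro Y' _
          positivity
  -- (2) sign flip
  have hflip : ∀ σ : Fin u → Bool,
      ∑ Y : Fin u → Fin n, ∑ Y' : Fin u → Fin n, Dp Y Y'
      = ∑ Y : Fin u → Fin n, ∑ Y' : Fin u → Fin n, Ds σ Y Y' := by
    intro σ
    rw [show (∑ Y : Fin u → Fin n, ∑ Y' : Fin u → Fin n, Dp Y Y')
        = ∑ p : (Fin u → Fin n) × (Fin u → Fin n), Dp p.1 p.2 from
        (Fintype.sum_prod_type (f := fun p : (Fin u → Fin n) × (Fin u → Fin n) => Dp p.1 p.2)).symm,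
      show (∑ Y : Fin u → Fin n, ∑ Y' : Fin u → Fin n, Ds σ Y Y')
        = ∑ p : (Fin u → Fin n) × (Fin u → Fin n), Ds σ p.1 p.2 from
        (Fintype.sum_prod_type (f := fun p : (Fin u → Fin n) × (Fin u → Fin n) => Ds σ p.1 p.2)).symm]
    refine Fintype.sum_equiv ⟨fun p => (fun i => if σ i then p.1 i else p.2 i,
        fun i => if σ i then p.2 i else p.1 i),
      fun p => (fun i => if σ i then p.1 i else p.2 i,
        fun i => if σ i then p.2 i else p.1 i), ?_, ?_⟩ _ _ ?_
    · intro p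
      ext i <;> by_cases h : σ i <;> simp [h]
    · intro p
      ext i <;> by_cases h : σ i <;> simp [h]
    · intro p
      apply Finset.sup'_congr hH rfl
      intro h _
      congr 1
      apply Finset.sum_congr rfl
      intro i _
      by_cases hσ : σ i <;> simp [hσ] <;> try ring
  -- (3) split
  have hDs_le : ∀ (σ : Fin u → Bool) (Y Y' : Fin u → Fin n),
      Ds σ Y Y' ≤ T Y σ + T Y' (fun i => !σ i) := by
    intro σ Y Y'
    have : Ds σ Y Y' = H.sup' hH (fun h =>
        (∑ i, (if σ i then (1:ℝ) else -1) * h (Y i)) / (u : ℝ)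
        + (∑ i, (if (!σ i) then (1:ℝ) else -1) * h (Y' i)) / (u : ℝ)) := by
      apply Finset.sup'_congr hH rfl
      intro h _
      rw [← add_div]
      congr 1
      rw [← Finset.sum_add_distrib]
      apply Finset.sum_congr rfl
      intro i _
      cases hσ : σ i
      · simp only [hσ, Bool.not_false]
        norm_num
        ring
      · simp only [hσ, Bool.not_true]
        norm_num
        ring
    rw [this]
    exact sup'_add_le' H hH _ _
  -- (4) not-reindex
  have hnot : ∀ Y' : Fin u → Fin n,
      ∑ σ : Fin u → Bool, T Y' (fun i => !σ i) = ∑ σ : Fin u → Bool, T Y' σ := by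
    intro Y'
    exact Fintype.sum_equiv
      (Equiv.arrowCongr (Equiv.refl (Fin u)) (Function.Involutive.toPerm not Bool.not_not))
      _ _ (fun σ => rfl)
  -- assembly
  set TT := ∑ Y : Fin u → Fin n, ∑ σ : Fin u → Bool, T Y σ with hTT
  have hbound : ∑ Y : Fin u → Fin n, ∑ Y' : Fin u → Fin n, Dp Y Y'
      ≤ 2 * (n:ℝ)^u * TT / 2 ^ u := by
    have hcard2 : (Fintype.card (Fin u → Bool) : ℝ) = 2 ^ u := by
      simp [Fintype.card_fun]
    have e1 : (2:ℝ) ^ u * (∑ Y : Fin u → Fin n, ∑ Y' : Fin u → Fin n, Dp Y Y')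
        = ∑ σ : Fin u → Bool, ∑ Y : Fin u → Fin n, ∑ Y' : Fin u → Fin n, Ds σ Y Y' := by
      rw [Finset.sum_congr rfl (fun σ _ => (hflip σ).symm), Finset.sum_const,
        Finset.card_univ, nsmul_eq_mul, hcard2]
    have e2 : ∑ σ : Fin u → Bool, ∑ Y : Fin u → Fin n, ∑ Y' : Fin u → Fin n, Ds σ Y Y'
        ≤ 2 * (n:ℝ)^u * TT := by
      calc ∑ σ : Fin u → Bool, ∑ Y : Fin u → Fin n, ∑ Y' : Fin u → Fin n, Ds σ Y Y'
          ≤ ∑ σ : Fin u → Bool, ∑ Y : Fin u → Fin n, ∑ Y' : Fin u → Fin n,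
              (T Y σ + T Y' (fun i => !σ i)) := by
            apply Finset.sum_le_sum
            intro σ _
            apply Finset.sum_le_sum
            intro Y _
            apply Finset.sum_le_sum
            intro Y' _
            exact hDs_le σ Y Y'
        _ = (n:ℝ)^u * (∑ σ : Fin u → Bool, ∑ Y : Fin u → Fin n, T Y σ)
            + (n:ℝ)^u * (∑ σ : Fin u → Bool, ∑ Y' : Fin u → Fin n, T Y' (fun i => !σ i)) := by
            have hc : ((Fintype.card (Fin u → Fin n)) : ℝ) = (n:ℝ)^u := by
              simp [Fintype.card_fun]
            have key : ∀ (A B : (Fin u → Fin n) → ℝ),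
                ∑ Y : Fin u → Fin n, ∑ Y' : Fin u → Fin n, (A Y + B Y')
                = (n:ℝ)^u * ∑ Y : Fin u → Fin n, A Y
                  + (n:ℝ)^u * ∑ Y' : Fin u → Fin n, B Y' := by
              intro A B
              calc ∑ Y : Fin u → Fin n, ∑ Y' : Fin u → Fin n, (A Y + B Y')
                  = ∑ Y : Fin u → Fin n,
                      ((n:ℝ)^u * A Y + ∑ Y' : Fin u → Fin n, B Y') := by
                    apply Finset.sum_congr rfl
                    intro Y _
                    rw [Finset.sum_add_distrib, Finset.sum_const, Finset.card_univ,
                      nsmul_eq_mul, hc]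
                _ = (n:ℝ)^u * ∑ Y : Fin u → Fin n, A Y
                    + (n:ℝ)^u * ∑ Y' : Fin u → Fin n, B Y' := by
                    rw [Finset.sum_add_distrib, ← Finset.mul_sum, Finset.sum_const,
                      Finset.card_univ, nsmul_eq_mul, hc]
            rw [Finset.sum_congr rfl
              (fun σ _ => key (fun Y => T Y σ) (fun Y' => T Y' (fun i => !σ i))),
              Finset.sum_add_distrib, ← Finset.mul_sum, ← Finset.mul_sum]
        _ = 2 * (n:ℝ)^u * TT := by
            have c1 : ∑ σ : Fin u → Bool, ∑ Y : Fin u → Fin n, T Y σ = TT :=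
              Finset.sum_comm
            have c2 : ∑ σ : Fin u → Bool, ∑ Y' : Fin u → Fin n, T Y' (fun i => !σ i)
                = TT := by
              rw [Finset.sum_comm]
              rw [Finset.sum_congr rfl (fun Y' _ => hnot Y')]
            rw [c1, c2]
            ring
    have e3 : ∑ Y : Fin u → Fin n, ∑ Y' : Fin u → Fin n, Dp Y Y'
        = (∑ σ : Fin u → Bool, ∑ Y : Fin u → Fin n, ∑ Y' : Fin u → Fin n, Ds σ Y Y')
          / 2 ^ u := by
      rw [← e1]
      field_simp
    rw [e3]
    gcongr
  -- final arithmetic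
  have hfin : ∑ Y : Fin u → Fin n,
      H.sup' hH (fun h => (∑ i, h (Y i)) / (u : ℝ) - (∑ i, h i) / (n : ℝ))
      ≤ 2 * TT / 2 ^ u := by
    calc ∑ Y : Fin u → Fin n,
        H.sup' hH (fun h => (∑ i, h (Y i)) / (u : ℝ) - (∑ i, h i) / (n : ℝ))
        ≤ ∑ Y : Fin u → Fin n, ∑ Y' : Fin u → Fin n, ((n:ℝ)^u)⁻¹ * Dp Y Y' :=
          Finset.sum_le_sum (fun Y _ => hS_le Y)
      _ = (∑ Y : Fin u → Fin n, ∑ Y' : Fin u → Fin n, Dp Y Y') / (n:ℝ)^u := by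
          rw [Finset.sum_div]
          apply Finset.sum_congr rfl
          intro Y _
          rw [← Finset.mul_sum, inv_mul_eq_div]
      _ ≤ (2 * (n:ℝ)^u * TT / 2 ^ u) / (n:ℝ)^u := by
          gcongr
      _ = 2 * TT / 2 ^ u := by
          rw [div_div, mul_comm ((2:ℝ)^u) ((n:ℝ)^u), ← div_div,
            mul_comm (2:ℝ) ((n:ℝ)^u), mul_assoc, mul_div_cancel_left₀ _ hnne]
  calc (∑ Y : Fin u → Fin n,
        H.sup' hH (fun h => (∑ i, h (Y i)) / (u : ℝ) - (∑ i, h i) / (n : ℝ))) / (n:ℝ)^u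
      ≤ (2 * TT / 2 ^ u) / (n:ℝ)^u := by
        gcongr
    _ = 2 * (TT / ((n:ℝ)^u * 2^u)) := by
        rw [div_div, mul_comm ((2:ℝ)^u) ((n:ℝ)^u), mul_div_assoc]
end two

/-- The transductive complexity is bounded by twice the inductive Rademacher
complexity: R⁺_u(H) ≤ 2 R^{ind}_u(H). -/
theorem transductive_le_two_inductive (n u : ℕ) (hn : 0 < n) (hu : 0 < u) (hun : u ≤ n)
    (H : Finset (Fin n → ℝ)) (hH : H.Nonempty) :
    (∑ Z ∈ (Finset.univ : Finset (Fin n)).powersetCard u,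
        H.sup' hH (fun h => (∑ i ∈ Z, h i) / (u : ℝ) - (∑ i, h i) / (n : ℝ)))
      / (((Finset.univ : Finset (Fin n)).powersetCard u).card : ℝ)
    ≤ 2 * ((∑ Y : Fin u → Fin n, ∑ σ : Fin u → Bool,
          H.sup' hH (fun h => (∑ i, (if σ i then (1 : ℝ) else -1) * h (Y i)) / (u : ℝ)))
        / ((n : ℝ) ^ u * 2 ^ u)) := by
  exact le_trans (step1 hn hu hun H hH) (step2 hn hu H hH)
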